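/- Let Λ = 2E₈ ⊥ 2U ⊥ 3I with η = ε₁ + ε₂ + ε₃ and Λ₀ = η^⊥. If h, h', h'' are three distinct special vectors in Λ₀ spanning a positive definite sublattice, then h + h' + h'' = 0. -/
import Mathlib


open Matrix

/-- Edges of the E₈ Dynkin diagram (chain 0-1-2-3-4-5-6 with node 7 attached to node 2). -/
def e8Edges : List (Fin 8 × Fin 8) := [(0,1),(1,2),(2,3),(3,4),(4,5),(5,6),(2,7)]

/-- Gram matrix of the E₈ root lattice. -/
def E8 : Matrix (Fin 8) (Fin 8) ℤ := Matrix.of fun i j =>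
  if i = j then 2 else if (i, j) ∈ e8Edges ∨ (j, i) ∈ e8Edges then -1 else 0

/-- Gram matrix of the hyperbolic plane U. -/
def U2 : Matrix (Fin 2) (Fin 2) ℤ := !![0, 1; 1, 0]

/-- Index type for Λ = 2E₈ ⊥ 2U ⊥ 3I (rank 23). -/
abbrev Idx := (Fin 8 ⊕ Fin 8) ⊕ (Fin 2 ⊕ Fin 2) ⊕ Fin 3

/-- Gram matrix of Λ = 2E₈ ⊥ 2U ⊥ 3I. -/
def G : Matrix Idx Idx ℤ := Matrix.of fun i j =>
  match i, j with
  | Sum.inl (Sum.inl a), Sum.inl (Sum.inl b) => E8 a b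
  | Sum.inl (Sum.inr a), Sum.inl (Sum.inr b) => E8 a b
  | Sum.inr (Sum.inl (Sum.inl a)), Sum.inr (Sum.inl (Sum.inl b)) => U2 a b
  | Sum.inr (Sum.inl (Sum.inr a)), Sum.inr (Sum.inl (Sum.inr b)) => U2 a b
  | Sum.inr (Sum.inr a), Sum.inr (Sum.inr b) => if a = b then 1 else 0
  | _, _ => 0

/-- The bilinear form of Λ. -/
def Bf (x y : Idx → ℤ) : ℤ := x ⬝ᵥ G.mulVec y

/-- The generator εₖ of the k-th I-summand. -/
def εv (k : Fin 3) : Idx → ℤ := fun i => match i with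
  | Sum.inr (Sum.inr j) => if j = k then 1 else 0
  | _ => 0

/-- η = ε₁ + ε₂ + ε₃. -/
def η : Idx → ℤ := εv 0 + εv 1 + εv 2

/-- A special vector: an element h of Λ₀ = η^⊥ with h·h = 6 and η − h divisible by 3 in Λ. -/
def IsSpecial (h : Idx → ℤ) : Prop :=
  Bf h η = 0 ∧ Bf h h = 6 ∧ ∃ w : Idx → ℤ, η - h = 3 • w

/-!
STATEMENT 5: If h, h', h'' are three distinct special vectors in Λ₀ spanning a
positive definite sublattice, then h + h' + h'' = 0.
-/

lemma Bf_add_left (x y z : Idx → ℤ) : Bf (x + y) z = Bf x z + Bf y z := by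
  simp [Bf, add_dotProduct]

lemma Bf_add_right (x y z : Idx → ℤ) : Bf x (y + z) = Bf x y + Bf x z := by
  simp [Bf, Matrix.mulVec_add, dotProduct_add]

lemma Bf_neg_left (x y : Idx → ℤ) : Bf (-x) y = -Bf x y := by
  simp [Bf, neg_dotProduct]

lemma Bf_neg_right (x y : Idx → ℤ) : Bf x (-y) = -Bf x y := by
  simp [Bf, Matrix.mulVec_neg, dotProduct_neg]

lemma Bf_sub_left (x y z : Idx → ℤ) : Bf (x - y) z = Bf x z - Bf y z := by
  rw [sub_eq_add_neg, Bf_add_left, Bf_neg_left]; ring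

lemma Bf_sub_right (x y z : Idx → ℤ) : Bf x (y - z) = Bf x y - Bf x z := by
  rw [sub_eq_add_neg, Bf_add_right, Bf_neg_right]; ring

lemma Bf_smul_left (a : ℤ) (x y : Idx → ℤ) : Bf (a • x) y = a * Bf x y := by
  unfold Bf; rw [smul_dotProduct, smul_eq_mul]

lemma Bf_smul_right (a : ℤ) (x y : Idx → ℤ) : Bf x (a • y) = a * Bf x y := by
  unfold Bf; rw [Matrix.mulVec_smul, dotProduct_smul, smul_eq_mul]

lemma G_symm : Gᵀ = G := by decide

lemma Bf_symm (x y : Idx → ℤ) : Bf x y = Bf y x := by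
  unfold Bf
  rw [Matrix.dotProduct_mulVec, ← Matrix.mulVec_transpose, G_symm, dotProduct_comm]

lemma pair_inner (h h' : Idx → ℤ) (hs : IsSpecial h) (hs' : IsSpecial h')
    (hne : h ≠ h')
    (hd : 0 < Bf (h - h') (h - h'))
    (hsum : h + h' ≠ 0 → 0 < Bf (h + h') (h + h')) :
    Bf h h' = -3 := by
  obtain ⟨-, hh, w, hw⟩ := hs
  obtain ⟨-, hh', w', hw'⟩ := hs'
  have hsymm : Bf h' h = Bf h h' := Bf_symm h' h
  have hdiff : h - h' = (3:ℤ) • (w' - w) := by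
    funext i
    have e := congrFun hw i
    have e' := congrFun hw' i
    simp [Pi.smul_apply] at e e' ⊢
    omega
  have e1 : Bf (h - h') (h - h') = 12 - 2 * Bf h h' := by
    rw [Bf_sub_left, Bf_sub_right, Bf_sub_right, hh, hh', hsymm]; ring
  have e2 : Bf (h - h') (h - h') = 9 * Bf (w' - w) (w' - w) := by
    rw [hdiff, Bf_smul_left, Bf_smul_right]; ring
  set n := Bf (w' - w) (w' - w) with hn
  have h9 : 12 - 2 * Bf h h' = 9 * n := by linarith
  have hnpos : 0 < n := by nlinarith
  by_cases hz : h + h' = 0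
  · have h'eq : h' = -h := by
      have := hz
      linear_combination (norm := abel) this
    rw [h'eq, Bf_neg_right, hh] at h9
    omega
  · have hp := hsum hz
    have e3 : Bf (h + h') (h + h') = 12 + 2 * Bf h h' := by
      rw [Bf_add_left, Bf_add_right, Bf_add_right, hh, hh', hsymm]; ring
    omega

theorem stmt5 (h h' h'' : Idx → ℤ)
    (hs : IsSpecial h) (hs' : IsSpecial h') (hs'' : IsSpecial h'')
    (hne : h ≠ h') (hne' : h ≠ h'') (hne'' : h' ≠ h'')
    -- h, h', h'' span a positive definite sublattice:
    (hpos : ∀ a b c : ℤ, a • h + b • h' + c • h'' ≠ 0 →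
      0 < Bf (a • h + b • h' + c • h'') (a • h + b • h' + c • h'')) :
    h + h' + h'' = 0 := by
  have pair : ∀ x y : Idx → ℤ,
      ((1:ℤ) • h + (-1:ℤ) • h' + (0:ℤ) • h'' = x - y ∨
       (1:ℤ) • h + (0:ℤ) • h' + (-1:ℤ) • h'' = x - y ∨
       (0:ℤ) • h + (1:ℤ) • h' + (-1:ℤ) • h'' = x - y) →
      ((1:ℤ) • h + (1:ℤ) • h' + (0:ℤ) • h'' = x + y ∨
       (1:ℤ) • h + (0:ℤ) • h' + (1:ℤ) • h'' = x + y ∨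
       (0:ℤ) • h + (1:ℤ) • h' + (1:ℤ) • h'' = x + y) →
      IsSpecial x → IsSpecial y → x ≠ y → Bf x y = -3 := by
    intro x y hdcase hscase hsx hsy hxy
    refine pair_inner x y hsx hsy hxy ?_ ?_
    · rcases hdcase with hc | hc | hc
      · rw [← hc]; exact hpos 1 (-1) 0 (by rw [hc]; exact sub_ne_zero.mpr hxy)
      · rw [← hc]; exact hpos 1 0 (-1) (by rw [hc]; exact sub_ne_zero.mpr hxy)
      · rw [← hc]; exact hpos 0 1 (-1) (by rw [hc]; exact sub_ne_zero.mpr hxy)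
    · intro hz
      rcases hscase with hc | hc | hc
      · rw [← hc]; exact hpos 1 1 0 (by rw [hc]; exact hz)
      · rw [← hc]; exact hpos 1 0 1 (by rw [hc]; exact hz)
      · rw [← hc]; exact hpos 0 1 1 (by rw [hc]; exact hz)
  have p1 : Bf h h' = -3 := by
    refine pair h h' (Or.inl ?_) (Or.inl ?_) hs hs' hne <;>
      · funext i; simp [sub_eq_add_neg]
  have p2 : Bf h h'' = -3 := by
    refine pair h h'' (Or.inr (Or.inl ?_)) (Or.inr (Or.inl ?_)) hs hs'' hne' <;>
      · funext i; simp [sub_eq_add_neg]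
  have p3 : Bf h' h'' = -3 := by
    refine pair h' h'' (Or.inr (Or.inr ?_)) (Or.inr (Or.inr ?_)) hs' hs'' hne'' <;>
      · funext i; simp [sub_eq_add_neg]
  obtain ⟨-, hh, -⟩ := hs
  obtain ⟨-, hh', -⟩ := hs'
  obtain ⟨-, hh'', -⟩ := hs''
  have e : Bf (h + h' + h'') (h + h' + h'') = 0 := by
    rw [Bf_add_left, Bf_add_left, Bf_add_right, Bf_add_right, Bf_add_right,
      Bf_add_right, Bf_add_right, Bf_add_right, hh, hh', hh'', p1, p2, p3,
      Bf_symm h' h, Bf_symm h'' h, Bf_symm h'' h', p1, p2, p3]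
    ring
  by_contra hne0
  have := hpos 1 1 1 (by simpa [one_smul] using hne0)
  rw [show (1:ℤ) • h + (1:ℤ) • h' + (1:ℤ) • h'' = h + h' + h'' by
    funext i; simp] at this
  omega
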